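/- Let p be an odd prime and l a positive integer, and let χ_l(j) = 0 if j divides 2^{ls}+1 for some s ≥ 1 and χ_l(j) = 1 otherwise. Then χ_l(p^i) = χ_l(p) for every positive integer i. -/

import Mathlib

open scoped Classical in
theorem chi_prime_power (p : ℕ) (hp : p.Prime) (hodd : Odd p) (l : ℕ) (hl : 0 < l) :
    ∀ i : ℕ, 0 < i →
      (if ∃ s : ℕ, 1 ≤ s ∧ p ^ i ∣ 2 ^ (l * s) + 1 then (0 : ℕ) else 1) =
        (if ∃ s : ℕ, 1 ≤ s ∧ p ∣ 2 ^ (l * s) + 1 then (0 : ℕ) else 1) := by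
  intro i hi
  have hp2 : p ≠ 2 := by
    rintro rfl; revert hodd; decide
  congr 1
  apply propext
  constructor
  · rintro ⟨s, hs, hdvd⟩
    exact ⟨s, hs, dvd_trans (dvd_pow_self p hi.ne') hdvd⟩
  · rintro ⟨s, hs, hdvd⟩
    refine ⟨s * p ^ (i - 1), ?_, ?_⟩
    · exact le_trans hs (Nat.le_mul_of_pos_right s (pow_pos hp.pos _))
    · have hx : ¬ p ∣ 2 ^ (l * s) := by
        intro h
        exact hp2 ((Nat.prime_dvd_prime_iff_eq hp Nat.prime_two).mp (hp.dvd_of_dvd_pow h))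
      have hn : Odd (p ^ (i - 1)) := hodd.pow
      have hLTE := Nat.emultiplicity_pow_add_pow hp hodd
        (x := 2 ^ (l * s)) (y := 1) hdvd hx hn
      have h1 : (1 : ℕ∞) ≤ emultiplicity p (2 ^ (l * s) + 1) :=
        le_emultiplicity_of_pow_dvd (by simpa using hdvd)
      have h2 : emultiplicity p (p ^ (i - 1)) = (i - 1 : ℕ) :=
        emultiplicity_pow_self_of_prime hp.prime _
      have hge : (i : ℕ∞) ≤ emultiplicity p ((2 ^ (l * s)) ^ (p ^ (i - 1)) + 1 ^ (p ^ (i - 1))) := by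
        rw [hLTE, h2]
        calc (i : ℕ∞) = (1 : ℕ∞) + (i - 1 : ℕ) := by
              rw [← Nat.cast_one, ← Nat.cast_add]
              norm_cast
              omega
          _ ≤ _ := add_le_add_left h1 _
      have := pow_dvd_of_le_emultiplicity hge
      simpa [← pow_mul, mul_assoc] using this
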